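/- arXiv:2510.25474 — 2 statements merged into one kernel-verified Lean document; each statement's English description precedes it below -/
import Mathlib

section
/- For |u| > 2, the logarithmic potential of the semicircle law, Ω(u) = ∫_{−2}^{2} log|u−λ| · (1/2π)√(4−λ²) dλ, equals u²/4 − 1/2 − (|u|/4)√(u²−4) + log((|u| + √(u²−4))/2). -/
open scoped BigOperators
open Real MeasureTheory intervalIntegral

lemma intcos (c : ℤ) (hc : c ≠ 0) : ∫ θ in (0:ℝ)..π, Real.cos (c * θ) = 0 := by
  have h : ∀ θ : ℝ, HasDerivAt (fun t : ℝ => Real.sin (c * t) / c) (Real.cos (c * θ)) θ := by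
    intro θ
    have := ((Real.hasDerivAt_sin (c * θ)).comp θ ((hasDerivAt_id θ).const_mul (c:ℝ))).div_const (c:ℝ)
    simpa [mul_comm, mul_div_assoc, mul_div_cancel_left₀, (Int.cast_ne_zero (α := ℝ)).2 hc] using this
  rw [integral_eq_sub_of_hasDerivAt (fun x _ => h x) (by apply Continuous.intervalIntegrable; continuity)]
  simp [Real.sin_int_mul_pi]

lemma intcossin (n : ℕ) : ∫ θ in (0:ℝ)..π, Real.cos (n * θ) * Real.sin θ ^ 2
    = if n = 2 then -(π/4) else if n = 0 then π/2 else 0 := by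
  have key : ∀ θ : ℝ, Real.cos (n * θ) * Real.sin θ ^ 2
      = Real.cos ((((n:ℤ)):ℝ)*θ)/2 - Real.cos (((((n:ℤ)+2):ℤ):ℝ)*θ)/4 - Real.cos (((((n:ℤ)-2):ℤ):ℝ)*θ)/4 := by
    intro θ
    have h1 : Real.sin θ ^ 2 = (1 - Real.cos (2*θ))/2 := by
      rw [Real.cos_two_mul]; have := Real.sin_sq_add_cos_sq θ; nlinarith
    have h2 : 2 * Real.cos (n*θ) * Real.cos (2*θ) = Real.cos (n*θ - 2*θ) + Real.cos (n*θ + 2*θ) :=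
      Real.two_mul_cos_mul_cos _ _
    have e0 : (((n:ℤ)):ℝ)*θ = (n:ℝ)*θ := by push_cast; ring
    have e1 : (((((n:ℤ)+2):ℤ):ℝ))*θ = (n:ℝ)*θ + 2*θ := by push_cast; ring
    have e2 : (((((n:ℤ)-2):ℤ):ℝ))*θ = (n:ℝ)*θ - 2*θ := by push_cast; ring
    rw [h1, e0, e1, e2]; nlinarith
  simp_rw [key]
  have ic : ∀ c : ℤ, Continuous (fun θ : ℝ => Real.cos (c * θ)) := by intro c; continuity
  rw [intervalIntegral.integral_sub
        ((((ic ((n:ℤ))).div_const 2).intervalIntegrable _ _).sub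
          (((ic ((n:ℤ)+2)).div_const 4).intervalIntegrable _ _))
        (((ic ((n:ℤ)-2)).div_const 4).intervalIntegrable _ _),
      intervalIntegral.integral_sub (((ic ((n:ℤ))).div_const 2).intervalIntegrable _ _)
        (((ic ((n:ℤ)+2)).div_const 4).intervalIntegrable _ _),
      intervalIntegral.integral_div, intervalIntegral.integral_div, intervalIntegral.integral_div]
  rcases eq_or_ne n 2 with rfl | h2
  · norm_num
    simpa using Real.sin_int_mul_pi 4
  rcases eq_or_ne n 0 with rfl | h0
  · norm_num
  · rw [intcos n (by exact_mod_cast h0), intcos ((n:ℤ)+2) (by omega), intcos ((n:ℤ)-2) (by omega)]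
    simp [h0, h2]

lemma ptws (w : ℝ) (hw : |w| < 1) (θ : ℝ) :
    HasSum (fun n : ℕ => w ^ n * Real.cos (n * θ) / n)
      (-Real.log (‖1 - (w : ℂ) * Complex.exp (θ * Complex.I)‖)) := by
  set z : ℂ := (w : ℂ) * Complex.exp (θ * Complex.I) with hz
  have hz1 : ‖z‖ < 1 := by
    rw [hz, norm_mul]
    simpa [Complex.norm_exp_ofReal_mul_I] using hw
  have H := (Complex.hasSum_taylorSeries_neg_log hz1).mapL Complex.reCLM
  have hre : ∀ n : ℕ, Complex.reCLM (z ^ n / n) = w ^ n * Real.cos (n * θ) / n := by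
    intro n
    have hzn : z ^ n = ((w ^ n : ℝ) : ℂ) * Complex.exp ((n * θ : ℝ) * Complex.I) := by
      rw [hz, mul_pow, ← Complex.exp_nat_mul]
      push_cast
      ring_nf
    simp only [Complex.reCLM_apply, hzn]
    rw [show ((n : ℂ)) = ((n : ℝ) : ℂ) by push_cast; rfl, Complex.div_ofReal_re]
    rw [Complex.re_ofReal_mul, Complex.exp_ofReal_mul_I_re]
  have : (Complex.reCLM (-Complex.log (1 - z)))
      = -Real.log (‖1 - z‖) := by
    simp [Complex.log_re]
  rw [← this]
  exact (funext hre : _) ▸ H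

lemma logint (w : ℝ) (hw : |w| < 1) :
    ∫ θ in (0:ℝ)..π,
      (2 * Real.log (‖1 - (w : ℂ) * Complex.exp (θ * Complex.I)‖)) *
        ((2/π) * Real.sin θ ^ 2) = w ^ 2 / 2 := by
  have hπ : (0:ℝ) < π := Real.pi_pos
  set F : ℕ → ℝ → ℝ := fun n θ =>
    (-2 * (w ^ n * Real.cos (n * θ) / n)) * ((2/π) * Real.sin θ ^ 2) with hF
  have hcont : ∀ n, Continuous (F n) := by
    intro n; rw [hF]; fun_prop
  have hbound : ∀ (n : ℕ) (θ : ℝ), ‖F n θ‖ ≤ (4/π) * |w| ^ n := by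
    intro n θ
    have h1 : |Real.cos (n*θ)| / (n:ℝ) ≤ 1 := by
      rcases Nat.eq_zero_or_pos n with rfl | hn
      · simp
      · apply div_le_one_of_le₀ ((Real.abs_cos_le_one _).trans (by exact_mod_cast hn)) (by positivity)
    have h2 : |Real.sin θ| ^ 2 ≤ 1 := by
      nlinarith [Real.abs_sin_le_one θ, abs_nonneg (Real.sin θ)]
    rw [hF]
    simp only [Real.norm_eq_abs, abs_mul, abs_neg, abs_pow, abs_div, Nat.abs_cast, abs_two]
    rw [abs_of_pos hπ]
    calc 2 * (|w|^n * |Real.cos (n*θ)|/(n:ℝ)) * (2/π * |Real.sin θ|^2)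
        ≤ 2 * (|w|^n * 1) * (2/π * 1) := by
          have : 2 * (|w|^n * |Real.cos (n*θ)|/(n:ℝ)) = 2 * (|w|^n * (|Real.cos (n*θ)|/(n:ℝ))) := by ring
          rw [this]
          gcongr <;> positivity
      _ = (4/π) * |w| ^ n := by ring
  have hsum : Summable (fun n : ℕ => (4/π) * |w| ^ n) :=
    (summable_geometric_of_lt_one (abs_nonneg _) hw).mul_left _
  have key : HasSum (fun n => ∫ θ in (0:ℝ)..π, F n θ)
      (∫ θ in (0:ℝ)..π,
        (2 * Real.log (‖1 - (w : ℂ) * Complex.exp (θ * Complex.I)‖)) *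
          ((2/π) * Real.sin θ ^ 2)) := by
    apply intervalIntegral.hasSum_integral_of_dominated_convergence
      (fun n _ => (4/π) * |w| ^ n)
    · exact fun n => (hcont n).aestronglyMeasurable
    · exact fun n => Filter.Eventually.of_forall fun t _ => hbound n t
    · exact Filter.Eventually.of_forall fun t _ => hsum
    · apply intervalIntegrable_const
    · refine Filter.Eventually.of_forall fun t _ => ?_
      have := ((ptws w hw t).mul_left (-2)).mul_right ((2/π) * Real.sin t ^ 2)
      convert this using 1
      case e'_3 => rfl
      case e'_6 => ring
  have hval : ∀ n : ℕ, (∫ θ in (0:ℝ)..π, F n θ) = if n = 2 then w^2/2 else 0 := by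
    intro n
    have : (∫ θ in (0:ℝ)..π, F n θ)
        = (-2 * (w ^ n / n) * (2/π)) * ∫ θ in (0:ℝ)..π, Real.cos (n * θ) * Real.sin θ ^ 2 := by
      rw [← intervalIntegral.integral_const_mul]
      apply intervalIntegral.integral_congr
      intro θ _
      rw [hF]; ring
    rw [this, intcossin]
    rcases eq_or_ne n 2 with rfl | h2
    · simp only [↓reduceIte, Nat.cast_ofNat]
      field_simp
      ring
    rcases eq_or_ne n 0 with rfl | h0
    · simp
    · simp [h2, h0]
  rw [funext hval] at key
  have : HasSum (fun n : ℕ => if n = 2 then w^2/2 else 0) (w^2/2) := hasSum_ite_eq 2 _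
  exact key.unique this

lemma keypos (u : ℝ) (hu : 2 < u) :
    (∫ l in (-2 : ℝ)..2, Real.log |u - l| * ((1 / (2 * Real.pi)) * Real.sqrt (4 - l ^ 2)))
      = u ^ 2 / 4 - 1 / 2 - (u / 4) * Real.sqrt (u ^ 2 - 4) +
        Real.log ((u + Real.sqrt (u ^ 2 - 4)) / 2) := by
  have hπ : (0:ℝ) < π := Real.pi_pos
  set r : ℝ := Real.sqrt (u^2 - 4) with hrdef
  have hr2 : r^2 = u^2 - 4 := Real.sq_sqrt (by nlinarith)
  have hr0 : 0 ≤ r := Real.sqrt_nonneg _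
  have hrlt : r < u := by nlinarith
  set s : ℝ := (u + r)/2 with hsdef
  have hs1 : 1 < s := by rw [hsdef]; nlinarith
  have hsinv : (u - r)/2 = 1/s := by
    rw [eq_div_iff (by linarith)]
    rw [hsdef]; nlinarith
  set w : ℝ := -(1/s) with hwdef
  have hw : |w| < 1 := by
    rw [hwdef, abs_neg, abs_of_pos (by positivity)]
    rw [div_lt_one (by linarith)]; linarith
  set g : ℝ → ℝ := fun l => Real.log |u - l| * ((1 / (2 * π)) * Real.sqrt (4 - l ^ 2)) with hg
  -- continuity of g on [-2,2]
  have hgc : ContinuousOn g (Set.Icc (-2:ℝ) 2) := by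
    apply ContinuousOn.mul
    · intro l hl
      apply ContinuousAt.continuousWithinAt
      apply Real.continuousAt_log ?_ |>.comp ((continuous_const.sub continuous_id).abs.continuousAt)
      have : l ≤ 2 := hl.2
      show |u - l| ≠ 0
      rw [abs_ne_zero]
      intro h; nlinarith [hl.2]
    · fun_prop
  -- substitution l = -2 cos θ
  have hsub : (∫ l in (-2:ℝ)..2, g l)
      = ∫ θ in (0:ℝ)..π, (2 * Real.sin θ) • g (-2 * Real.cos θ) := by
    have h := intervalIntegral.integral_comp_smul_deriv'
      (f := fun θ : ℝ => -2 * Real.cos θ) (f' := fun θ : ℝ => 2 * Real.sin θ)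
      (g := g) (a := 0) (b := π)
      (fun x _ => by simpa [neg_mul, mul_comm] using (Real.hasDerivAt_cos x).const_mul (-2:ℝ))
      (by fun_prop)
      (hgc.mono (by
        intro x hx
        obtain ⟨θ, _, rfl⟩ := hx
        simp only [Set.mem_Icc]
        constructor <;> nlinarith [Real.neg_one_le_cos θ, Real.cos_le_one θ]))
    simp only [Real.cos_zero, Real.cos_pi, Function.comp] at h
    norm_num at h
    rw [← h]
    simp only [smul_eq_mul, neg_mul]
  have hA0 : ∀ θ : ℝ, ‖1 - (w:ℂ) * Complex.exp (θ * Complex.I)‖ ≠ 0 := by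
    intro θ
    have h1 : ‖(w:ℂ) * Complex.exp (θ * Complex.I)‖ = |w| := by
      rw [norm_mul, Complex.norm_exp_ofReal_mul_I, Complex.norm_real, Real.norm_eq_abs, mul_one]
    have h2 : (1:ℝ) - |w| ≤ ‖1 - (w:ℂ) * Complex.exp (θ * Complex.I)‖ := by
      calc (1:ℝ) - |w| = ‖(1:ℂ)‖ - ‖(w:ℂ) * Complex.exp (θ * Complex.I)‖ := by
            rw [h1, norm_one]
        _ ≤ _ := by
            have := norm_sub_norm_le (1:ℂ) ((w:ℂ) * Complex.exp (θ * Complex.I))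
            simpa using this
    have hlt : (0:ℝ) < 1 - |w| := by linarith
    exact (lt_of_lt_of_le hlt h2).ne'
  have hs0 : (0:ℝ) < s := by linarith
  have hsum : s + 1/s = u := by rw [← hsinv, hsdef]; ring
  have hpt : ∀ θ ∈ Set.uIcc (0:ℝ) π, (2 * Real.sin θ) • g (-2 * Real.cos θ)
      = (Real.log s) * ((2/π) * Real.sin θ ^ 2)
        + (2 * Real.log (‖1 - (w:ℂ) * Complex.exp (θ * Complex.I)‖)) *
            ((2/π) * Real.sin θ ^ 2) := by
    intro θ hθ
    simp only [smul_eq_mul, neg_mul]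
    have hθ' : θ ∈ Set.Icc (0:ℝ) π := by rwa [Set.uIcc_of_le hπ.le] at hθ
    have hsin : 0 ≤ Real.sin θ := Real.sin_nonneg_of_nonneg_of_le_pi hθ'.1 hθ'.2
    have hpos : 0 < u + 2 * Real.cos θ := by nlinarith [Real.neg_one_le_cos θ]
    set A : ℝ := ‖1 - (w:ℂ) * Complex.exp (θ * Complex.I)‖ with hA
    have hA2 : A^2 = 1 - 2*w*Real.cos θ + w^2 := by
      rw [hA, Complex.sq_norm, Complex.normSq_apply]
      simp only [Complex.sub_re, Complex.sub_im, Complex.one_re, Complex.one_im,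
        Complex.mul_re, Complex.mul_im, Complex.ofReal_re, Complex.ofReal_im,
        Complex.exp_ofReal_mul_I_re, Complex.exp_ofReal_mul_I_im]
      nlinarith [Real.sin_sq_add_cos_sq θ]
    have hid : u + 2*Real.cos θ = s * A^2 := by
      rw [hA2, hwdef]
      have he : s * (1 - 2*(-(1/s))*Real.cos θ + (-(1/s))^2) = s + 2*Real.cos θ + 1/s := by
        field_simp
        ring
      rw [he]
      linarith [hsum]
    have hA0' : A ≠ 0 := hA0 θ
    have hlog : Real.log (u + 2*Real.cos θ) = Real.log s + 2 * Real.log A := by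
      rw [hid, Real.log_mul (by linarith) (pow_ne_zero _ hA0'), Real.log_pow]
      push_cast; ring
    have hsqrt : Real.sqrt (4 - (-(2*Real.cos θ))^2) = 2 * Real.sin θ := by
      rw [show 4 - (-(2*Real.cos θ))^2 = (2*Real.sin θ)^2 by linear_combination (-4:ℝ) * (Real.sin_sq_add_cos_sq θ)]
      exact Real.sqrt_sq (by linarith)
    have habs : |u - (-(2*Real.cos θ))| = u + 2*Real.cos θ := by
      rw [abs_of_pos (by linarith)]; ring
    rw [hg]
    simp only
    rw [habs, hsqrt, hlog]
    field_simp
  rw [hsub, intervalIntegral.integral_congr hpt]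
  have hc2 : Continuous fun θ : ℝ =>
      (2 * Real.log (‖1 - (w:ℂ) * Complex.exp (θ * Complex.I)‖)) *
        ((2/π) * Real.sin θ ^ 2) := by
    have hcA : Continuous fun θ : ℝ => ‖1 - (w:ℂ) * Complex.exp (θ * Complex.I)‖ := by
      apply continuous_norm.comp
      fun_prop
    apply Continuous.mul _ (by fun_prop)
    apply continuous_const.mul
    exact hcA.log hA0
  have hc1 : Continuous fun θ : ℝ => (Real.log s) * ((2/π) * Real.sin θ ^ 2) := by fun_prop
  rw [intervalIntegral.integral_add (hc1.intervalIntegrable _ _) (hc2.intervalIntegrable _ _)]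
  rw [logint w hw]
  have hse : (∫ θ in (0:ℝ)..π, Real.log s * ((2/π) * Real.sin θ ^ 2)) = Real.log s := by
    rw [intervalIntegral.integral_const_mul, intervalIntegral.integral_const_mul,
      integral_sin_sq]
    simp [Real.sin_pi]
  rw [hse]
  have hwsq : w^2 = ((u - r)/2)^2 := by rw [hwdef, neg_sq, ← hsinv]
  rw [hwsq]
  linear_combination (1/8 : ℝ) * hr2

/-- For `|u| > 2`, the logarithmic potential of the semicircle law,
`Ω(u) = ∫_{-2}^{2} log|u-λ| · (1/2π)√(4-λ²) dλ`, equals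
`u²/4 - 1/2 - (|u|/4)√(u²-4) + log((|u| + √(u²-4))/2)`. -/
theorem stmt11 (u : ℝ) (hu : 2 < |u|) :
    (∫ l in (-2 : ℝ)..2, Real.log |u - l| * ((1 / (2 * Real.pi)) * Real.sqrt (4 - l ^ 2)))
      = u ^ 2 / 4 - 1 / 2 - (|u| / 4) * Real.sqrt (u ^ 2 - 4) +
        Real.log ((|u| + Real.sqrt (u ^ 2 - 4)) / 2) := by
  rcases abs_cases u with ⟨h1, h2⟩ | ⟨h1, h2⟩
  · rw [h1] at hu ⊢
    exact keypos u hu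
  · rw [h1] at hu ⊢
    have hre : (∫ l in (-2 : ℝ)..2, Real.log |u - l| * ((1 / (2 * Real.pi)) * Real.sqrt (4 - l ^ 2)))
        = ∫ l in (-2 : ℝ)..2, Real.log |(-u) - l| * ((1 / (2 * Real.pi)) * Real.sqrt (4 - l ^ 2)) := by
      have h := intervalIntegral.integral_comp_neg
        (a := (-2:ℝ)) (b := 2)
        (f := fun l => Real.log |(-u) - l| * ((1 / (2 * Real.pi)) * Real.sqrt (4 - l ^ 2)))
      rw [neg_neg] at h
      rw [← h]
      apply intervalIntegral.integral_congr
      intro l _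
      simp only
      rw [show (-u) - (-l) = -(u - l) by ring, abs_neg, show (-l:ℝ)^2 = l^2 by ring]
    rw [hre, show u^2 = (-u)^2 by ring]
    exact keypos (-u) hu
end

section
/- Define K(p,d) = π^{p(d−p)/2} · (∏_{i=1}^p Γ(i/2) ∏_{i=1}^{d−p} Γ(i/2)) / (∏_{i=1}^d Γ(i/2)) · (p(d−p)/(2π))^{(p(d−p)+1)/2}. Then for fixed p ≥ 2, lim_{d→∞} (1/(p(d−p))) log K(p,d) = (log p + 1)/2. -/
open scoped BigOperators
open Filter

/-- The Kac–Rice volume-and-normalization constant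
`K(p,d) = π^{p(d-p)/2} · (∏_{i=1}^p Γ(i/2) ∏_{i=1}^{d-p} Γ(i/2)) / ∏_{i=1}^d Γ(i/2)
· (p(d-p)/(2π))^{(p(d-p)+1)/2}`. -/
noncomputable def kacRiceConst (p d : ℕ) : ℝ :=
  Real.pi ^ (((p : ℝ) * ((d : ℝ) - (p : ℝ))) / 2) *
    ((∏ i ∈ Finset.Icc 1 p, Real.Gamma ((i : ℝ) / 2)) *
      (∏ i ∈ Finset.Icc 1 (d - p), Real.Gamma ((i : ℝ) / 2)) /
      ∏ i ∈ Finset.Icc 1 d, Real.Gamma ((i : ℝ) / 2)) *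
    (((p : ℝ) * ((d : ℝ) - (p : ℝ))) / (2 * Real.pi)) ^
      ((((p : ℝ) * ((d : ℝ) - (p : ℝ))) + 1) / 2)

section KacRiceAux
open Nat

private lemma log_div_nat : Tendsto (fun n : ℕ => Real.log n / n) atTop (nhds 0) :=
  (Real.isLittleO_log_id_atTop.tendsto_div_nhds_zero).comp tendsto_natCast_atTop_atTop

private lemma one_div_nat : Tendsto (fun n : ℕ => 1 / (n:ℝ)) atTop (nhds 0) :=
  tendsto_one_div_atTop_nhds_zero_nat

private lemma stirling_log :
    Tendsto (fun n : ℕ => (Real.log (n ! : ℝ) - n * Real.log n + n) / n) atTop (nhds 0) := by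
  have hs : Tendsto (fun n : ℕ => Real.log (Stirling.stirlingSeq n)) atTop
      (nhds (Real.log (Real.sqrt Real.pi))) :=
    (Real.continuousAt_log (by positivity)).tendsto.comp Stirling.tendsto_stirlingSeq_sqrt_pi
  have h1 : Tendsto (fun n : ℕ => Real.log (Stirling.stirlingSeq n) / n
      + (1/2) * (Real.log 2 / n) + (1/2) * (Real.log n / n)) atTop (nhds 0) := by
    have := ((hs.mul one_div_nat).add ((tendsto_const_nhds (x := Real.log 2)).mul one_div_nat |>.const_mul (1/2:ℝ))).add (log_div_nat.const_mul (1/2:ℝ))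
    simpa [mul_one_div, div_eq_mul_inv] using this
  refine h1.congr' ?_
  filter_upwards [eventually_ge_atTop 1] with n hn
  have hn0 : (0:ℝ) < n := by exact_mod_cast hn
  have hform := Stirling.log_stirlingSeq_formula n
  rw [Real.log_mul two_ne_zero hn0.ne', Real.log_div hn0.ne' (Real.exp_ne_zero 1),
    Real.log_exp] at hform
  rw [hform]
  field_simp
  ring

private lemma fac_seq (j : ℕ → ℕ) (hj : Tendsto j atTop atTop) (C : ℝ)
    (hC : ∀ᶠ n : ℕ in atTop, |(j n : ℝ) - (n : ℝ)/2| ≤ C) :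
    Tendsto (fun n : ℕ => Real.log ((j n)! : ℝ) / n - Real.log n / 2) atTop
      (nhds (-(Real.log 2 + 1)/2)) := by
  have hkey : ∀ᶠ n : ℕ in atTop, |(j n : ℝ)/n - 1/2| ≤ C / n := by
    filter_upwards [hC, eventually_ge_atTop 1] with n hn hn1
    have hn0 : (0:ℝ) < n := by exact_mod_cast hn1
    have heq : (j n : ℝ) / n - 1/2 = ((j n : ℝ) - n/2) / n := by
      field_simp
    rw [heq, abs_div, abs_of_pos hn0]
    gcongr
  -- j n / n → 1/2
  have hhalf : Tendsto (fun n : ℕ => (j n : ℝ) / n) atTop (nhds (1/2)) := by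
    rw [tendsto_iff_norm_sub_tendsto_zero]
    apply squeeze_zero' (by filter_upwards with n; positivity)
      (g := fun n : ℕ => C * (1/n))
    · filter_upwards [hkey] with n hn
      simpa [Real.norm_eq_abs, div_eq_mul_one_div C] using hn
    · simpa using one_div_nat.const_mul C
  have hj1 : ∀ᶠ n : ℕ in atTop, 1 ≤ j n := hj.eventually_ge_atTop 1
  have he : Tendsto (fun n : ℕ =>
      (Real.log ((j n)! : ℝ) - (j n) * Real.log (j n) + (j n)) / (j n)) atTop (nhds 0) :=
    stirling_log.comp hj
  -- log (j n) - log n → - log 2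
  have hlogj : Tendsto (fun n : ℕ => Real.log (j n) - Real.log n) atTop (nhds (-Real.log 2)) := by
    have hc : Tendsto (fun n : ℕ => Real.log ((j n : ℝ) / n)) atTop (nhds (Real.log (1/2))) :=
      (Real.continuousAt_log (by norm_num)).tendsto.comp hhalf
    rw [Real.log_div one_ne_zero two_ne_zero, Real.log_one, zero_sub] at hc
    refine hc.congr' ?_
    filter_upwards [hj1, eventually_ge_atTop 1] with n h1 h2
    have hb : (0:ℝ) < j n := by exact_mod_cast h1
    have hb2 : (0:ℝ) < n := by exact_mod_cast h2
    rw [Real.log_div hb.ne' hb2.ne']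
  -- (j n / n - 1/2) * log n → 0
  have hterm3 : Tendsto (fun n : ℕ => ((j n : ℝ)/n - 1/2) * Real.log n) atTop (nhds 0) := by
    rw [tendsto_zero_iff_abs_tendsto_zero]
    apply squeeze_zero' (by filter_upwards with n; simp only [Function.comp_apply]; positivity)
      (g := fun n : ℕ => C * (Real.log n / n))
    · filter_upwards [hkey] with n hn
      have hlog : 0 ≤ Real.log n := Real.log_natCast_nonneg n
      simp only [Function.comp_apply, abs_mul, abs_of_nonneg hlog]
      calc |(j n : ℝ)/n - 1/2| * Real.log n ≤ (C/n) * Real.log n :=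
            mul_le_mul_of_nonneg_right hn hlog
        _ = C * (Real.log n / n) := by ring
    · simpa using log_div_nat.const_mul C
  -- assemble
  have hmain : Tendsto (fun n : ℕ =>
      (Real.log ((j n)! : ℝ) - (j n) * Real.log (j n) + (j n)) / (j n) * ((j n : ℝ)/n)
      + ((j n : ℝ)/n) * (Real.log (j n) - Real.log n)
      + ((j n : ℝ)/n - 1/2) * Real.log n - (j n : ℝ)/n) atTop
      (nhds (0 * (1/2) + (1/2) * (-Real.log 2) + 0 - 1/2)) :=
    (((he.mul hhalf).add (hhalf.mul hlogj)).add hterm3).sub hhalf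
  have hval : (0 : ℝ) * (1/2) + (1/2) * (-Real.log 2) + 0 - 1/2 = -(Real.log 2 + 1)/2 := by ring
  rw [hval] at hmain
  refine hmain.congr' ?_
  filter_upwards [hj1, eventually_ge_atTop 1] with n h1 h2
  have hjn : (0:ℝ) < j n := by exact_mod_cast h1
  have hn0 : (0:ℝ) < n := by exact_mod_cast h2
  field_simp
  ring

private lemma div2_tendsto (k : ℕ) : Tendsto (fun n : ℕ => (n + k)/2 - 1) atTop atTop := by
  apply tendsto_atTop_atTop.mpr
  intro b
  exact ⟨2*b + 2, fun n hn => by omega⟩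

private lemma gamma_half (k : ℕ) (hk : 1 ≤ k) :
    Tendsto (fun n : ℕ => Real.log (Real.Gamma (((n:ℝ) + k)/2)) / n - Real.log n / 2)
      atTop (nhds (-(Real.log 2 + 1)/2)) := by
  set j1 : ℕ → ℕ := fun n => (n + k)/2 - 1 with hj1def
  set j2 : ℕ → ℕ := fun n => (n + k)/2 with hj2def
  have hj1 : Tendsto j1 atTop atTop := div2_tendsto k
  have hj2 : Tendsto j2 atTop atTop := hj1.comp (tendsto_id) |>.congr (fun n => rfl) |> fun _ => by
    exact tendsto_atTop_atTop.mpr fun b => ⟨2*b + 2, fun n hn => by simp only [hj2def]; omega⟩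
  have hC1 : ∀ᶠ n : ℕ in atTop, |(j1 n : ℝ) - (n:ℝ)/2| ≤ (k:ℝ) + 2 := by
    filter_upwards [eventually_ge_atTop (2*k + 4)] with n hn
    have h1 : 2 * (j1 n) ≤ n + k := by simp only [hj1def]; omega
    have h2 : n ≤ 2 * (j1 n) + k + 2 := by simp only [hj1def]; omega
    have h1' : (2:ℝ) * (j1 n) ≤ (n:ℝ) + k := by exact_mod_cast h1
    have h2' : (n:ℝ) ≤ 2 * (j1 n) + k + 2 := by exact_mod_cast h2
    rw [abs_le]
    constructor <;> linarith
  have hC2 : ∀ᶠ n : ℕ in atTop, |(j2 n : ℝ) - (n:ℝ)/2| ≤ (k:ℝ) + 2 := by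
    filter_upwards [eventually_ge_atTop (2*k + 4)] with n hn
    have h1 : 2 * (j2 n) ≤ n + k := by simp only [hj2def]; omega
    have h2 : n ≤ 2 * (j2 n) + 2 := by simp only [hj2def]; omega
    have h1' : (2:ℝ) * (j2 n) ≤ (n:ℝ) + k := by exact_mod_cast h1
    have h2' : (n:ℝ) ≤ 2 * (j2 n) + 2 := by exact_mod_cast h2
    rw [abs_le]
    constructor <;> linarith
  have hlow := fac_seq j1 hj1 ((k:ℝ)+2) hC1
  have hhigh := fac_seq j2 hj2 ((k:ℝ)+2) hC2
  apply tendsto_of_tendsto_of_tendsto_of_le_of_le' hlow hhigh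
  · -- lower bound : log (j1 n)! ≤ log Γ((n+k)/2)
    filter_upwards [eventually_ge_atTop (2*k + 6)] with n hn
    have hm2 : 2 ≤ (n+k)/2 := by omega
    have hcast1 : ((j1 n : ℝ)) + 1 = (j2 n : ℝ) := by
      simp only [hj1def, hj2def]
      have : 1 ≤ (n+k)/2 := by omega
      push_cast [Nat.cast_sub this]
      ring
    have hgam1 : Real.Gamma ((j2 n : ℝ)) = (j1 n)! := by
      rw [← hcast1, Real.Gamma_nat_eq_factorial]
    -- (j2 n : ℝ) ≤ ((n:ℝ)+k)/2
    have hle1 : (j2 n : ℝ) ≤ ((n:ℝ)+k)/2 := by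
      have h : 2 * (j2 n) ≤ n + k := by simp only [hj2def]; omega
      have h' : (2:ℝ) * (j2 n) ≤ (n:ℝ) + k := by exact_mod_cast h
      linarith
    have h2le : (2:ℝ) ≤ (j2 n : ℝ) := by exact_mod_cast hm2
    have hmono : Real.Gamma ((j2 n : ℝ)) ≤ Real.Gamma (((n:ℝ)+k)/2) :=
      Real.Gamma_strictMonoOn_Ici.monotoneOn (Set.mem_Ici.mpr h2le)
        (Set.mem_Ici.mpr (h2le.trans hle1)) hle1
    have hpos : 0 < Real.Gamma ((j2 n : ℝ)) := Real.Gamma_pos_of_pos (by linarith)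
    have hlog : Real.log ((j1 n)! : ℝ) ≤ Real.log (Real.Gamma (((n:ℝ)+k)/2)) := by
      rw [← hgam1]
      exact Real.log_le_log hpos hmono
    have hn0 : (0:ℝ) < n := by
      have : 1 ≤ n := by omega
      exact_mod_cast this
    gcongr
  · -- upper bound
    filter_upwards [eventually_ge_atTop (2*k + 6)] with n hn
    have hgam2 : Real.Gamma ((j2 n : ℝ) + 1) = (j2 n)! := Real.Gamma_nat_eq_factorial _
    have hle2 : ((n:ℝ)+k)/2 ≤ (j2 n : ℝ) + 1 := by
      have h : n + k ≤ 2 * (j2 n) + 1 := by simp only [hj2def]; omega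
      have h' : (n:ℝ) + k ≤ 2 * (j2 n) + 1 := by exact_mod_cast h
      linarith
    have h2le : (2:ℝ) ≤ ((n:ℝ)+k)/2 := by
      have : (4:ℝ) ≤ (n:ℝ) + k := by
        have : 4 ≤ n + k := by omega
        exact_mod_cast this
      linarith
    have hmono : Real.Gamma (((n:ℝ)+k)/2) ≤ Real.Gamma ((j2 n : ℝ) + 1) :=
      Real.Gamma_strictMonoOn_Ici.monotoneOn (Set.mem_Ici.mpr h2le)
        (Set.mem_Ici.mpr (h2le.trans hle2)) hle2
    have hpos : 0 < Real.Gamma (((n:ℝ)+k)/2) := Real.Gamma_pos_of_pos (by linarith)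
    have hlog : Real.log (Real.Gamma (((n:ℝ)+k)/2)) ≤ Real.log ((j2 n)! : ℝ) := by
      rw [← hgam2]
      exact Real.log_le_log hpos hmono
    have hn0 : (0:ℝ) < n := by
      have : 1 ≤ n := by omega
      exact_mod_cast this
    gcongr

private lemma sum_claim (p : ℕ) (hp : 1 ≤ p) :
    Tendsto (fun n : ℕ =>
      (∑ i ∈ Finset.Ioc n (n+p), Real.log (Real.Gamma ((i:ℝ)/2))) / ((p:ℝ)*n)
        - Real.log n / 2)
      atTop (nhds (-(Real.log 2 + 1)/2)) := by
  have hlo := gamma_half 1 le_rfl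
  have hhi := gamma_half p hp
  have hp0 : (0:ℝ) < p := by exact_mod_cast hp
  apply tendsto_of_tendsto_of_tendsto_of_le_of_le' hlo hhi
  · filter_upwards [eventually_ge_atTop 4] with n hn
    have hn0 : (0:ℝ) < n := by
      have : 1 ≤ n := by omega
      exact_mod_cast this
    have hn4 : (4:ℝ) ≤ n := by exact_mod_cast hn
    have h2 : (2:ℝ) ≤ ((n:ℝ) + 1)/2 := by linarith
    have hS : (p:ℝ) * Real.log (Real.Gamma (((n:ℝ) + 1)/2))
        ≤ ∑ i ∈ Finset.Ioc n (n+p), Real.log (Real.Gamma ((i:ℝ)/2)) := by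
      have := Finset.card_nsmul_le_sum (Finset.Ioc n (n+p))
        (fun i => Real.log (Real.Gamma ((i:ℝ)/2)))
        (Real.log (Real.Gamma (((n:ℝ) + 1)/2))) ?_
      · simpa [Nat.card_Ioc, nsmul_eq_mul] using this
      · intro i hi
        rw [Finset.mem_Ioc] at hi
        have hi1 : (n:ℝ) + 1 ≤ (i:ℝ) := by exact_mod_cast hi.1
        have hle : ((n:ℝ)+1)/2 ≤ (i:ℝ)/2 := by linarith
        exact Real.log_le_log (Real.Gamma_pos_of_pos (by linarith))
          (Real.Gamma_strictMonoOn_Ici.monotoneOn (Set.mem_Ici.mpr h2)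
            (Set.mem_Ici.mpr (h2.trans hle)) hle)
    have key : Real.log (Real.Gamma (((n:ℝ) + 1)/2)) / n
        ≤ (∑ i ∈ Finset.Ioc n (n+p), Real.log (Real.Gamma ((i:ℝ)/2))) / ((p:ℝ)*n) := by
      rw [show Real.log (Real.Gamma (((n:ℝ) + 1)/2)) / n
          = ((p:ℝ) * Real.log (Real.Gamma (((n:ℝ) + 1)/2))) / ((p:ℝ)*n) by
        rw [mul_div_mul_left _ _ hp0.ne']]
      exact div_le_div_of_nonneg_right ((le_refl _).trans hS) (by positivity) |>.trans le_rfl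
    push_cast
    linarith [key]
  · filter_upwards [eventually_ge_atTop 4] with n hn
    have hn0 : (0:ℝ) < n := by
      have : 1 ≤ n := by omega
      exact_mod_cast this
    have hn4 : (4:ℝ) ≤ n := by exact_mod_cast hn
    have hS : ∑ i ∈ Finset.Ioc n (n+p), Real.log (Real.Gamma ((i:ℝ)/2))
        ≤ (p:ℝ) * Real.log (Real.Gamma (((n:ℝ) + p)/2)) := by
      have := Finset.sum_le_card_nsmul (Finset.Ioc n (n+p))
        (fun i => Real.log (Real.Gamma ((i:ℝ)/2)))
        (Real.log (Real.Gamma (((n:ℝ) + p)/2))) ?_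
      · simpa [Nat.card_Ioc, nsmul_eq_mul] using this
      · intro i hi
        rw [Finset.mem_Ioc] at hi
        have hi1 : (n:ℝ) + 1 ≤ (i:ℝ) := by exact_mod_cast hi.1
        have hi2 : (i:ℝ) ≤ (n:ℝ) + p := by exact_mod_cast hi.2
        have h2i : (2:ℝ) ≤ (i:ℝ)/2 := by linarith
        have hle : (i:ℝ)/2 ≤ ((n:ℝ)+p)/2 := by linarith
        exact Real.log_le_log (Real.Gamma_pos_of_pos (by linarith))
          (Real.Gamma_strictMonoOn_Ici.monotoneOn (Set.mem_Ici.mpr h2i)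
            (Set.mem_Ici.mpr (h2i.trans hle)) hle)
    have key : (∑ i ∈ Finset.Ioc n (n+p), Real.log (Real.Gamma ((i:ℝ)/2))) / ((p:ℝ)*n)
        ≤ Real.log (Real.Gamma (((n:ℝ) + p)/2)) / n := by
      rw [show Real.log (Real.Gamma (((n:ℝ) + p)/2)) / n
          = ((p:ℝ) * Real.log (Real.Gamma (((n:ℝ) + p)/2))) / ((p:ℝ)*n) by
        rw [mul_div_mul_left _ _ hp0.ne']]
      exact div_le_div_of_nonneg_right hS (by positivity)
    linarith [key]

private lemma prod_gamma_pos (m : ℕ) :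
    0 < ∏ i ∈ Finset.Icc 1 m, Real.Gamma ((i:ℝ)/2) := by
  apply Finset.prod_pos
  intro i hi
  have h1 : 1 ≤ i := (Finset.mem_Icc.mp hi).1
  have : (1:ℝ) ≤ i := by exact_mod_cast h1
  exact Real.Gamma_pos_of_pos (by linarith)

private lemma log_prod_gamma (m : ℕ) :
    Real.log (∏ i ∈ Finset.Icc 1 m, Real.Gamma ((i:ℝ)/2))
      = ∑ i ∈ Finset.Icc 1 m, Real.log (Real.Gamma ((i:ℝ)/2)) := by
  apply Real.log_prod
  intro i hi
  have h1 : 1 ≤ i := (Finset.mem_Icc.mp hi).1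
  have : (1:ℝ) ≤ i := by exact_mod_cast h1
  exact (Real.Gamma_pos_of_pos (by linarith)).ne'

private lemma sum_split (m p : ℕ) :
    ∑ i ∈ Finset.Icc 1 (m + p), Real.log (Real.Gamma ((i:ℝ)/2))
      = (∑ i ∈ Finset.Icc 1 m, Real.log (Real.Gamma ((i:ℝ)/2)))
        + ∑ i ∈ Finset.Ioc m (m + p), Real.log (Real.Gamma ((i:ℝ)/2)) := by
  rw [show Finset.Icc 1 (m + p) = Finset.Ioc 0 (m + p) by ext; simp only [Finset.mem_Icc, Finset.mem_Ioc]; omega,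
    show Finset.Icc 1 m = Finset.Ioc 0 m by ext; simp only [Finset.mem_Icc, Finset.mem_Ioc]; omega]
  exact (Finset.sum_Ioc_consecutive _ (Nat.zero_le m) (Nat.le_add_right m p)).symm

private lemma mainN (p : ℕ) (hp : 2 ≤ p) :
    Tendsto (fun n : ℕ => Real.log (kacRiceConst p (n + p)) / ((p:ℝ) * n)) atTop
      (nhds ((Real.log p + 1)/2)) := by
  have hp0 : (0:ℝ) < p := by
    have : 0 < p := by omega
    exact_mod_cast this
  set L1 : ℝ := Real.log (∏ i ∈ Finset.Icc 1 p, Real.Gamma ((i:ℝ)/2)) with hL1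
  -- the explicit part
  set A : ℕ → ℝ := fun n =>
    L1 * (1/((p:ℝ)*n)) + (Real.log p - Real.log 2)/2
      + (Real.log p - Real.log 2 - Real.log Real.pi) * (1/(2*(p:ℝ)*n))
      + (1/(2*(p:ℝ))) * (Real.log n / n) with hAdef
  have hrecip : Tendsto (fun n : ℕ => 1/((p:ℝ)*n)) atTop (nhds 0) := by
    have := one_div_nat.const_mul (1/(p:ℝ))
    rw [mul_zero] at this
    refine this.congr fun n => ?_
    rw [one_div_mul_one_div]
  have hrecip2 : Tendsto (fun n : ℕ => 1/(2*(p:ℝ)*n)) atTop (nhds 0) := by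
    have := one_div_nat.const_mul (1/(2*(p:ℝ)))
    rw [mul_zero] at this
    refine this.congr fun n => ?_
    rw [one_div_mul_one_div]
  have hA : Tendsto A atTop (nhds ((Real.log p - Real.log 2)/2)) := by
    have t1 := hrecip.const_mul L1
    have t2 := hrecip2.const_mul (Real.log p - Real.log 2 - Real.log Real.pi)
    have t3 := log_div_nat.const_mul (1/(2*(p:ℝ)))
    have h4 := ((t1.add (tendsto_const_nhds (x := (Real.log p - Real.log 2)/2))).add t2).add t3
    have h0 : L1 * 0 + (Real.log (p:ℝ) - Real.log 2)/2
        + (Real.log (p:ℝ) - Real.log 2 - Real.log Real.pi) * 0 + (1/(2*(p:ℝ))) * 0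
        = (Real.log (p:ℝ) - Real.log 2)/2 := by ring
    rw [h0] at h4
    exact h4.congr fun n => by simp only [hAdef]
  have hB := sum_claim p (by omega)
  have hcomb := hA.sub hB
  have hval : (Real.log p - Real.log 2)/2 - (-(Real.log 2 + 1)/2) = (Real.log p + 1)/2 := by
    ring
  rw [hval] at hcomb
  refine hcomb.congr' ?_
  filter_upwards [eventually_ge_atTop 1] with n hn
  have hn0 : (0:ℝ) < n := by exact_mod_cast hn
  have hd : ((n + p : ℕ) : ℝ) - (p:ℝ) = (n:ℝ) := by push_cast; ring
  have hdnat : (n + p) - p = n := by omega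
  have hP1 := prod_gamma_pos p
  have hP2 := prod_gamma_pos n
  have hP3 := prod_gamma_pos (n + p)
  have hbase : (0:ℝ) < (p:ℝ)*n/(2*Real.pi) := by positivity
  have e1 : kacRiceConst p (n+p)
      = Real.pi ^ (((p:ℝ)*(n:ℝ))/2)
        * (((∏ i ∈ Finset.Icc 1 p, Real.Gamma ((i:ℝ)/2))
            * ∏ i ∈ Finset.Icc 1 n, Real.Gamma ((i:ℝ)/2))
          / ∏ i ∈ Finset.Icc 1 (n+p), Real.Gamma ((i:ℝ)/2))
        * (((p:ℝ)*n/(2*Real.pi)) ^ ((((p:ℝ)*n)+1)/2)) := by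
    simp only [kacRiceConst, hdnat, hd]
  have hlogK : Real.log (kacRiceConst p (n+p))
      = ((p:ℝ)*n/2) * Real.log Real.pi
        + (L1 + (∑ i ∈ Finset.Icc 1 n, Real.log (Real.Gamma ((i:ℝ)/2)))
            - ((∑ i ∈ Finset.Icc 1 n, Real.log (Real.Gamma ((i:ℝ)/2)))
              + ∑ i ∈ Finset.Ioc n (n+p), Real.log (Real.Gamma ((i:ℝ)/2))))
        + ((((p:ℝ)*n)+1)/2) * (Real.log p + Real.log n - (Real.log 2 + Real.log Real.pi)) := by
    rw [e1, Real.log_mul (by positivity) (by positivity),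
      Real.log_mul (by positivity) (by positivity),
      Real.log_rpow Real.pi_pos, Real.log_rpow hbase,
      Real.log_div (by positivity) hP3.ne',
      Real.log_mul hP1.ne' hP2.ne',
      Real.log_div (by positivity) (by positivity),
      Real.log_mul (by positivity) hn0.ne',
      Real.log_mul (by norm_num) Real.pi_pos.ne',
      log_prod_gamma, log_prod_gamma, log_prod_gamma, sum_split]
    simp only [hL1, log_prod_gamma]
  rw [hlogK]
  set s := ∑ i ∈ Finset.Ioc n (n + p), Real.log (Real.Gamma ((i:ℝ)/2)) with hs
  set t := ∑ i ∈ Finset.Icc 1 n, Real.log (Real.Gamma ((i:ℝ)/2)) with ht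
  simp only [hAdef]
  field_simp
  ring

end KacRiceAux

/-- For fixed `p ≥ 2`,
`lim_{d→∞} (1/(p(d-p))) log K(p,d) = (log p + 1)/2`. -/
theorem stmt15 (p : ℕ) (hp : 2 ≤ p) :
    Tendsto (fun d : ℕ => Real.log (kacRiceConst p d) / ((p : ℝ) * ((d : ℝ) - (p : ℝ))))
      atTop (nhds ((Real.log p + 1) / 2)) := by

  have hm := (mainN p hp).comp (tendsto_sub_atTop_nat p)
  refine hm.congr' ?_
  filter_upwards [eventually_ge_atTop p] with d hd
  have h1 : d - p + p = d := by omega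
  have h2 : ((d - p : ℕ) : ℝ) = (d:ℝ) - (p:ℝ) := by
    rw [Nat.cast_sub hd]
  simp only [Function.comp_apply, h1, h2]
end
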